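/- Let s_1, s_2 be nonnegative integers. There exists an (s_1+s_2)-tuple of 3-cycles in the alternating group A_4 with product 1 whose entries generate A_4 and of which exactly s_1 entries are A_4-conjugate to (1 2 3) and exactly s_2 entries are A_4-conjugate to (1 3 2), if and only if s_1 ≡ s_2 (mod 3) and s_1 + s_2 ≥ 3. (Nonemptiness criterion for the Nielsen classes ni(A_4, C_{±3^{s_1,s_2}}).) -/

import Mathlib

/-- The 3-cycle `(1 2 3)` in `A_4` (0-indexed: `0 ↦ 1 ↦ 2 ↦ 0`). -/
def c123 : Equiv.Perm (Fin 4) := Equiv.swap 0 1 * Equiv.swap 1 2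

/-- The 3-cycle `(1 3 4)` in `A_4` (0-indexed: `0 ↦ 2 ↦ 3 ↦ 0`). -/
def c134 : Equiv.Perm (Fin 4) := Equiv.swap 0 2 * Equiv.swap 2 3

/-- The 3-cycle `(1 4 2)` in `A_4` (0-indexed: `0 ↦ 3 ↦ 1 ↦ 0`). -/
def c142 : Equiv.Perm (Fin 4) := Equiv.swap 0 3 * Equiv.swap 3 1

/-- `x` and `y` are conjugate by an element of the alternating group `A_4`. -/
def ConjA4 (x y : Equiv.Perm (Fin 4)) : Prop :=
  ∃ h ∈ alternatingGroup (Fin 4), h * x * h⁻¹ = y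

open scoped Classical in
/-- The Nielsen class `ni(A_4, C_{±3^{s₁,s₂}})`: tuples of `s₁ + s₂` 3-cycles in `A_4`
with product 1 whose entries generate `A_4`, exactly `s₁` of which are `A_4`-conjugate
to `(1 2 3)` and exactly `s₂` of which are `A_4`-conjugate to `(1 3 2)`. -/
def NielsenPM (s₁ s₂ : ℕ) (l : List (Equiv.Perm (Fin 4))) : Prop :=
  l.length = s₁ + s₂ ∧ (∀ σ ∈ l, σ.IsThreeCycle) ∧ l.prod = 1 ∧
    Subgroup.closure {σ | σ ∈ l} = alternatingGroup (Fin 4) ∧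
    l.countP (fun σ => decide (ConjA4 c123 σ)) = s₁ ∧
    l.countP (fun σ => decide (ConjA4 c123⁻¹ σ)) = s₂

/-! ### Decidability instances -/

instance : DecidablePred (· ∈ alternatingGroup (Fin 4)) := fun _ =>
  decidable_of_iff _ (Equiv.Perm.mem_alternatingGroup).symm

instance instDecConjA4 (x y : Equiv.Perm (Fin 4)) : Decidable (ConjA4 x y) := by
  unfold ConjA4; infer_instance

/-! ### Basic facts about the 3-cycles -/

lemma isThreeCycle_c123 : c123.IsThreeCycle := by
  rw [c123, Equiv.swap_comm]
  exact Equiv.Perm.isThreeCycle_swap_mul_swap_same (by decide) (by decide) (by decide)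

lemma isThreeCycle_c134 : c134.IsThreeCycle := by
  rw [c134, Equiv.swap_comm]
  exact Equiv.Perm.isThreeCycle_swap_mul_swap_same (by decide) (by decide) (by decide)

lemma isThreeCycle_c142 : c142.IsThreeCycle := by
  rw [c142, Equiv.swap_comm]
  exact Equiv.Perm.isThreeCycle_swap_mul_swap_same (by decide) (by decide) (by decide)

lemma conj_pp1 : ConjA4 c123 c123 := by decide
lemma conj_pp2 : ConjA4 c123 c134 := by decide
lemma conj_pp3 : ConjA4 c123 c142 := by decide
lemma conj_pm1 : ¬ ConjA4 c123 c123⁻¹ := by decide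
lemma conj_pm2 : ¬ ConjA4 c123 c134⁻¹ := by decide
lemma conj_pm3 : ¬ ConjA4 c123 c142⁻¹ := by decide
lemma conj_mp1 : ¬ ConjA4 c123⁻¹ c123 := by decide
lemma conj_mp2 : ¬ ConjA4 c123⁻¹ c134 := by decide
lemma conj_mp3 : ¬ ConjA4 c123⁻¹ c142 := by decide
lemma conj_mm1 : ConjA4 c123⁻¹ c123⁻¹ := by decide
lemma conj_mm2 : ConjA4 c123⁻¹ c134⁻¹ := by decide
lemma conj_mm3 : ConjA4 c123⁻¹ c142⁻¹ := by decide

/-- Replacing the (possibly classical) decidability instance in a `countP` by the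
canonical one. -/
lemma countP_decide_congr (x : Equiv.Perm (Fin 4))
    {i : ∀ σ : Equiv.Perm (Fin 4), Decidable (ConjA4 x σ)} (l : List (Equiv.Perm (Fin 4))) :
    (l.countP fun σ => @decide (ConjA4 x σ) (i σ)) =
      l.countP fun σ => decide (ConjA4 x σ) := by
  have h : (fun σ => @decide (ConjA4 x σ) (i σ)) = fun σ => decide (ConjA4 x σ) :=
    funext fun σ => decide_eq_decide.mpr Iff.rfl
  rw [h]

lemma cube_enum : ∀ σ : Equiv.Perm (Fin 4), σ ^ 3 = 1 →
    σ = 1 ∨ σ = c123 ∨ σ = c123⁻¹ ∨ σ = c134 ∨ σ = c134⁻¹ ∨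
      σ = c123 * c134 ∨ σ = (c123 * c134)⁻¹ ∨ σ = c134 * c123 ∨ σ = (c134 * c123)⁻¹ := by
  decide

/-- Any subgroup containing `c123` and `c134` contains the alternating group. -/
lemma alternating_le (K : Subgroup (Equiv.Perm (Fin 4))) (h1 : c123 ∈ K) (h2 : c134 ∈ K) :
    alternatingGroup (Fin 4) ≤ K := by
  rw [← Equiv.Perm.closure_three_cycles_eq_alternating]
  refine (Subgroup.closure_le _).mpr ?_
  intro σ hσ
  have h3 : σ ^ 3 = 1 := by
    have ho : orderOf σ = 3 := Equiv.Perm.IsThreeCycle.orderOf hσ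
    rw [← ho]; exact pow_orderOf_eq_one σ
  rcases cube_enum σ h3 with h | h | h | h | h | h | h | h | h <;> subst h
  · exact K.one_mem
  · exact h1
  · exact K.inv_mem h1
  · exact h2
  · exact K.inv_mem h2
  · exact K.mul_mem h1 h2
  · exact K.inv_mem (K.mul_mem h1 h2)
  · exact K.mul_mem h2 h1
  · exact K.inv_mem (K.mul_mem h2 h1)

lemma closure_eq_alternating (l : List (Equiv.Perm (Fin 4)))
    (h3 : ∀ σ ∈ l, σ.IsThreeCycle)
    (h1 : c123 ∈ Subgroup.closure {σ | σ ∈ l}) (h2 : c134 ∈ Subgroup.closure {σ | σ ∈ l}) :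
    Subgroup.closure {σ | σ ∈ l} = alternatingGroup (Fin 4) :=
  le_antisymm ((Subgroup.closure_le _).mpr fun σ hσ =>
    (h3 σ hσ).mem_alternatingGroup) (alternating_le _ h1 h2)

/-! ### The homomorphism to `C₃` -/

/-- The quotient map `A₄ → C₃` as a bare function. -/
def gfun (x : Equiv.Perm (Fin 4)) : ZMod 3 :=
  (if ConjA4 c123 x then 1 else 0) + 2 * (if ConjA4 c123⁻¹ x then 1 else 0)

lemma gfun_one : gfun 1 = 0 := by decide

set_option maxHeartbeats 1000000 in
lemma gfun_mul : ∀ x y : Equiv.Perm (Fin 4), x ∈ alternatingGroup (Fin 4) →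
    y ∈ alternatingGroup (Fin 4) → gfun (x * y) = gfun x + gfun y := by decide

lemma gfun_prod : ∀ l : List (Equiv.Perm (Fin 4)),
    (∀ σ ∈ l, σ ∈ alternatingGroup (Fin 4)) →
    gfun l.prod = ((l.countP fun σ => decide (ConjA4 c123 σ)) : ZMod 3) +
      2 * ((l.countP fun σ => decide (ConjA4 c123⁻¹ σ)) : ZMod 3) := by
  intro l
  induction l with
  | nil => intro _; simpa using gfun_one
  | cons x t ih =>
    intro hmem
    have hx : x ∈ alternatingGroup (Fin 4) := hmem x List.mem_cons_self
    have ht : ∀ σ ∈ t, σ ∈ alternatingGroup (Fin 4) := fun σ hσ =>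
      hmem σ (List.mem_cons_of_mem x hσ)
    have htp : t.prod ∈ alternatingGroup (Fin 4) := Subgroup.list_prod_mem _ ht
    rw [List.prod_cons, gfun_mul x t.prod hx htp, ih ht, List.countP_cons, List.countP_cons]
    by_cases hP : ConjA4 c123 x <;> by_cases hM : ConjA4 c123⁻¹ x <;>
      simp [gfun, hP, hM, decide_eq_true_eq] <;> push_cast <;> ring

/-! ### Base cases and padding -/

lemma nielsen_base30 : NielsenPM 3 0 [c142, c134, c123] := by
  refine ⟨rfl, ?_, by decide, ?_, ?_, ?_⟩
  · intro σ hσ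
    rcases (by simpa using hσ : σ = c142 ∨ σ = c134 ∨ σ = c123) with rfl | rfl | rfl
    exacts [isThreeCycle_c142, isThreeCycle_c134, isThreeCycle_c123]
  · refine closure_eq_alternating _ ?_ ?_ ?_
    · intro σ hσ
      rcases (by simpa using hσ : σ = c142 ∨ σ = c134 ∨ σ = c123) with rfl | rfl | rfl
      exacts [isThreeCycle_c142, isThreeCycle_c134, isThreeCycle_c123]
    · exact Subgroup.subset_closure (by simp)
    · exact Subgroup.subset_closure (by simp)
  · simp [List.countP_cons, decide_eq_true_eq, conj_pp1, conj_pp2, conj_pp3]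
  · simp [List.countP_cons, decide_eq_true_eq, conj_mp1, conj_mp2, conj_mp3]

lemma nielsen_base03 : NielsenPM 0 3 [c123⁻¹, c134⁻¹, c142⁻¹] := by
  refine ⟨rfl, ?_, by decide, ?_, ?_, ?_⟩
  · intro σ hσ
    rcases (by simpa using hσ : σ = c123⁻¹ ∨ σ = c134⁻¹ ∨ σ = c142⁻¹) with rfl | rfl | rfl
    exacts [isThreeCycle_c123.inv, isThreeCycle_c134.inv, isThreeCycle_c142.inv]
  · refine closure_eq_alternating _ ?_ ?_ ?_
    · intro σ hσ
      rcases (by simpa using hσ : σ = c123⁻¹ ∨ σ = c134⁻¹ ∨ σ = c142⁻¹) with rfl | rfl | rfl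
      exacts [isThreeCycle_c123.inv, isThreeCycle_c134.inv, isThreeCycle_c142.inv]
    · simpa using Subgroup.inv_mem _ (Subgroup.subset_closure (by simp : c123⁻¹ ∈ _))
    · simpa using Subgroup.inv_mem _ (Subgroup.subset_closure (by simp : c134⁻¹ ∈ _))
  · simp [List.countP_cons, decide_eq_true_eq, conj_pm1, conj_pm2, conj_pm3]
  · simp [List.countP_cons, decide_eq_true_eq, conj_mm1, conj_mm2, conj_mm3]

lemma nielsen_base22 : NielsenPM 2 2 [c123, c123⁻¹, c134, c134⁻¹] := by
  refine ⟨rfl, ?_, by decide, ?_, ?_, ?_⟩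
  · intro σ hσ
    rcases (by simpa using hσ : σ = c123 ∨ σ = c123⁻¹ ∨ σ = c134 ∨ σ = c134⁻¹) with
      rfl | rfl | rfl | rfl
    exacts [isThreeCycle_c123, isThreeCycle_c123.inv, isThreeCycle_c134, isThreeCycle_c134.inv]
  · refine closure_eq_alternating _ ?_ ?_ ?_
    · intro σ hσ
      rcases (by simpa using hσ : σ = c123 ∨ σ = c123⁻¹ ∨ σ = c134 ∨ σ = c134⁻¹) with
        rfl | rfl | rfl | rfl
      exacts [isThreeCycle_c123, isThreeCycle_c123.inv, isThreeCycle_c134, isThreeCycle_c134.inv]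
    · exact Subgroup.subset_closure (by simp)
    · exact Subgroup.subset_closure (by simp)
  · simp [List.countP_cons, decide_eq_true_eq, conj_pp1, conj_pp2, conj_pm1, conj_pm2]
  · simp [List.countP_cons, decide_eq_true_eq, conj_mp1, conj_mp2, conj_mm1, conj_mm2]

lemma nielsen_base14 : NielsenPM 1 4 [c123⁻¹, c134⁻¹, c142⁻¹, c123, c123⁻¹] := by
  refine ⟨rfl, ?_, by decide, ?_, ?_, ?_⟩
  · intro σ hσ
    rcases (by simpa using hσ :
        σ = c123⁻¹ ∨ σ = c134⁻¹ ∨ σ = c142⁻¹ ∨ σ = c123 ∨ σ = c123⁻¹) with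
      rfl | rfl | rfl | rfl | rfl
    exacts [isThreeCycle_c123.inv, isThreeCycle_c134.inv, isThreeCycle_c142.inv,
      isThreeCycle_c123, isThreeCycle_c123.inv]
  · refine closure_eq_alternating _ ?_ ?_ ?_
    · intro σ hσ
      rcases (by simpa using hσ :
          σ = c123⁻¹ ∨ σ = c134⁻¹ ∨ σ = c142⁻¹ ∨ σ = c123 ∨ σ = c123⁻¹) with
        rfl | rfl | rfl | rfl | rfl
      exacts [isThreeCycle_c123.inv, isThreeCycle_c134.inv, isThreeCycle_c142.inv,
        isThreeCycle_c123, isThreeCycle_c123.inv]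
    · exact Subgroup.subset_closure (by simp)
    · simpa using Subgroup.inv_mem _ (Subgroup.subset_closure (by simp : c134⁻¹ ∈ _))
  · simp [List.countP_cons, decide_eq_true_eq, conj_pp1, conj_pm1, conj_pm2, conj_pm3]
  · simp [List.countP_cons, decide_eq_true_eq, conj_mp1, conj_mm1, conj_mm2, conj_mm3]

lemma nielsen_base41 : NielsenPM 4 1 [c142, c134, c123, c123⁻¹, c123] := by
  refine ⟨rfl, ?_, by decide, ?_, ?_, ?_⟩
  · intro σ hσ
    rcases (by simpa using hσ :
        σ = c142 ∨ σ = c134 ∨ σ = c123 ∨ σ = c123⁻¹ ∨ σ = c123) with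
      rfl | rfl | rfl | rfl | rfl
    exacts [isThreeCycle_c142, isThreeCycle_c134, isThreeCycle_c123, isThreeCycle_c123.inv,
      isThreeCycle_c123]
  · refine closure_eq_alternating _ ?_ ?_ ?_
    · intro σ hσ
      rcases (by simpa using hσ :
          σ = c142 ∨ σ = c134 ∨ σ = c123 ∨ σ = c123⁻¹ ∨ σ = c123) with
        rfl | rfl | rfl | rfl | rfl
      exacts [isThreeCycle_c142, isThreeCycle_c134, isThreeCycle_c123, isThreeCycle_c123.inv,
        isThreeCycle_c123]
    · exact Subgroup.subset_closure (by simp)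
    · exact Subgroup.subset_closure (by simp)
  · simp [List.countP_cons, decide_eq_true_eq, conj_pp1, conj_pp2, conj_pp3, conj_pm1]
  · simp [List.countP_cons, decide_eq_true_eq, conj_mp1, conj_mp2, conj_mp3, conj_mm1]

/-- Padding a Nielsen-class tuple with triples of `c123` and of `c123⁻¹`. -/
lemma nielsenPM_pad {b₁ b₂ : ℕ} {l : List (Equiv.Perm (Fin 4))} (hb : NielsenPM b₁ b₂ l)
    (m n : ℕ) :
    NielsenPM (b₁ + 3 * m) (b₂ + 3 * n)
      (l ++ (List.replicate (3 * m) c123 ++ List.replicate (3 * n) c123⁻¹)) := by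
  obtain ⟨hlen, h3, hprod, hgen, hc1, hc2⟩ := hb
  have hcube : c123 ^ 3 = 1 := by decide
  have hcube' : (c123⁻¹) ^ 3 = 1 := by decide
  have hall3 : ∀ σ ∈ l ++ (List.replicate (3 * m) c123 ++ List.replicate (3 * n) c123⁻¹),
      σ.IsThreeCycle := by
    intro σ hσ
    simp only [List.mem_append, List.mem_replicate] at hσ
    rcases hσ with h | ⟨_, h⟩ | ⟨_, h⟩
    · exact h3 σ h
    · rw [h]; exact isThreeCycle_c123
    · rw [h]; exact isThreeCycle_c123.inv
  refine ⟨?_, hall3, ?_, ?_, ?_, ?_⟩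
  · simp [hlen]; omega
  · rw [List.prod_append, List.prod_append, List.prod_replicate, List.prod_replicate,
      hprod, one_mul, pow_mul, hcube, one_pow, pow_mul, hcube', one_pow, one_mul]
  · refine le_antisymm ((Subgroup.closure_le _).mpr fun σ hσ =>
      (hall3 σ hσ).mem_alternatingGroup) ?_
    rw [← hgen]
    exact Subgroup.closure_mono fun σ hσ => by
      simp only [Set.mem_setOf_eq, List.mem_append] at *; exact Or.inl hσ
  · rw [List.countP_append, List.countP_append, List.countP_replicate, List.countP_replicate,
      hc1]
    simp only [decide_eq_true_eq, if_pos conj_pp1, if_neg conj_pm1]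
    omega
  · rw [List.countP_append, List.countP_append, List.countP_replicate, List.countP_replicate,
      hc2]
    simp only [decide_eq_true_eq, if_neg conj_mp1, if_pos conj_mm1]
    omega

/-! ### The main theorem -/

/-- **Nonemptiness criterion** for `ni(A_4, C_{±3^{s₁,s₂}})`: the Nielsen class is
nonempty iff `s₁ ≡ s₂ (mod 3)` and `s₁ + s₂ ≥ 3`. -/
theorem nielsenPM_nonempty_iff (s₁ s₂ : ℕ) :
    (∃ l : List (Equiv.Perm (Fin 4)), NielsenPM s₁ s₂ l) ↔
      (s₁ % 3 = s₂ % 3 ∧ 3 ≤ s₁ + s₂) := by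
  constructor
  · rintro ⟨l, hlen, h3, hprod, hgen, hc1, hc2⟩
    have hmemA : ∀ σ ∈ l, σ ∈ alternatingGroup (Fin 4) := fun σ h =>
      (h3 σ h).mem_alternatingGroup
    constructor
    · have hg := gfun_prod l hmemA
      rw [hprod, gfun_one] at hg
      have hc1' : l.countP (fun σ => decide (ConjA4 c123 σ)) = s₁ := by
        rw [← hc1]
        exact List.countP_congr fun a _ => by simp only [decide_eq_true_eq]
      have hc2' : l.countP (fun σ => decide (ConjA4 c123⁻¹ σ)) = s₂ := by
        rw [← hc2]
        exact List.countP_congr fun a _ => by simp only [decide_eq_true_eq]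
      rw [hc1', hc2'] at hg
      have h33 : (3 : ZMod 3) = 0 := by decide
      have hz : (s₁ : ZMod 3) = (s₂ : ZMod 3) := by
        linear_combination -hg - (s₂ : ZMod 3) * h33
      exact (ZMod.natCast_eq_natCast_iff' s₁ s₂ 3).mp hz
    · rw [← hlen]
      rcases l with _ | ⟨x, _ | ⟨y, _ | ⟨z, t⟩⟩⟩
      · exfalso
        have hm : c123 ∈ Subgroup.closure {σ : Equiv.Perm (Fin 4) | σ ∈ ([] : List _)} := by
          rw [hgen]; exact isThreeCycle_c123.mem_alternatingGroup
        have he : {σ : Equiv.Perm (Fin 4) | σ ∈ ([] : List _)} = (∅ : Set _) := by simp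
        rw [he, Subgroup.closure_empty, Subgroup.mem_bot] at hm
        exact absurd hm (by decide)
      · exfalso
        have hx1 : x = 1 := by simpa using hprod
        have ho := Equiv.Perm.IsThreeCycle.orderOf (h3 x (by simp))
        rw [hx1, orderOf_one] at ho
        omega
      · exfalso
        have hxy : x * y = 1 := by simpa using hprod
        have hy : y = x⁻¹ := by
          calc y = x⁻¹ * (x * y) := by group
          _ = x⁻¹ := by rw [hxy, mul_one]
        have hsub : {σ : Equiv.Perm (Fin 4) | σ ∈ [x, y]} ⊆
            (Subgroup.zpowers x : Set (Equiv.Perm (Fin 4))) := by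
          intro σ hσ
          simp only [Set.mem_setOf_eq, List.mem_cons, List.mem_singleton,
            List.not_mem_nil, or_false] at hσ
          rcases hσ with rfl | rfl
          · exact Subgroup.mem_zpowers σ
          · rw [hy]; exact Subgroup.inv_mem _ (Subgroup.mem_zpowers x)
        have hle : alternatingGroup (Fin 4) ≤ Subgroup.zpowers x := by
          rw [← hgen]; exact (Subgroup.closure_le _).mpr hsub
        obtain ⟨i, hi⟩ := Subgroup.mem_zpowers_iff.mp
          (hle isThreeCycle_c123.mem_alternatingGroup)
        obtain ⟨j, hj⟩ := Subgroup.mem_zpowers_iff.mp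
          (hle isThreeCycle_c134.mem_alternatingGroup)
        have hcomm : c123 * c134 = c134 * c123 := by
          rw [← hi, ← hj, ← zpow_add, ← zpow_add, add_comm]
        exact absurd hcomm (by decide)
      · simp only [List.length_cons]; omega
  · rintro ⟨hmod, hsum⟩
    have h0 : s₁ % 3 = 0 ∨ s₁ % 3 = 1 ∨ s₁ % 3 = 2 := by omega
    rcases h0 with h0 | h0 | h0
    · by_cases h : 3 ≤ s₁
      · obtain ⟨m, rfl⟩ : ∃ m, s₁ = 3 + 3 * m := ⟨(s₁ - 3) / 3, by omega⟩
        obtain ⟨n, rfl⟩ : ∃ n, s₂ = 0 + 3 * n := ⟨s₂ / 3, by omega⟩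
        exact ⟨_, nielsenPM_pad nielsen_base30 m n⟩
      · obtain ⟨m, rfl⟩ : ∃ m, s₁ = 0 + 3 * m := ⟨0, by omega⟩
        obtain ⟨n, rfl⟩ : ∃ n, s₂ = 3 + 3 * n := ⟨(s₂ - 3) / 3, by omega⟩
        exact ⟨_, nielsenPM_pad nielsen_base03 m n⟩
    · by_cases h : 4 ≤ s₁
      · obtain ⟨m, rfl⟩ : ∃ m, s₁ = 4 + 3 * m := ⟨(s₁ - 4) / 3, by omega⟩
        obtain ⟨n, rfl⟩ : ∃ n, s₂ = 1 + 3 * n := ⟨(s₂ - 1) / 3, by omega⟩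
        exact ⟨_, nielsenPM_pad nielsen_base41 m n⟩
      · obtain ⟨m, rfl⟩ : ∃ m, s₁ = 1 + 3 * m := ⟨0, by omega⟩
        obtain ⟨n, rfl⟩ : ∃ n, s₂ = 4 + 3 * n := ⟨(s₂ - 4) / 3, by omega⟩
        exact ⟨_, nielsenPM_pad nielsen_base14 m n⟩
    · obtain ⟨m, rfl⟩ : ∃ m, s₁ = 2 + 3 * m := ⟨(s₁ - 2) / 3, by omega⟩
      obtain ⟨n, rfl⟩ : ∃ n, s₂ = 2 + 3 * n := ⟨(s₂ - 2) / 3, by omega⟩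
      exact ⟨_, nielsenPM_pad nielsen_base22 m n⟩
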